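/- arXiv:2107.06447 — 2 statements merged into one kernel-verified Lean document; each statement's English description precedes it below -/
import Mathlib

section
/- Let p be a nonzero Laurent polynomial in z₁,…,z_d over ℂ with lowest degree component h. Then for every n ∈ W, the polynomial r_n(z,λ̃) = λ̃ · z₁^{γ₁'}⋯z_d^{γ_d'} · h(μ_n⊙z) − z₁^{γ₁'}⋯z_d^{γ_d'} is irreducible in the polynomial ring ℂ[z₁,…,z_d,λ̃]. -/
open scoped BigOperators
open Complex

noncomputable section

/-- Laurent polynomials in `z₁,…,z_d` over `ℂ`, encoded as the group algebra of `ℤ^d`. -/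
abbrev LMv (d : ℕ) : Type := AddMonoidAlgebra ℂ (Fin d →₀ ℤ)

/-- Laurent polynomials in `z₁,…,z_d` and `λ` over `ℂ`. -/
abbrev LMvF (d : ℕ) : Type := AddMonoidAlgebra ℂ ((Fin d →₀ ℤ) × ℤ)

/-- `e^{2πin/q}`. -/
def muC (q : ℕ) (n : ℤ) : ℂ := Complex.exp (2 * Real.pi * Complex.I * n / q)

/-- The vector `μ_n = (e^{2πin₁/q₁},…,e^{2πin_d/q_d})`. -/
def muV {d : ℕ} (q : Fin d → ℕ) (n : Fin d → ℤ) : Fin d → ℂ := fun j => muC (q j) (n j)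

/-- Substitution `z_j ↦ c_j z_j` in a Laurent polynomial in `z`. -/
def scaleZ {d : ℕ} (c : Fin d → ℂ) (p : LMv d) : LMv d :=
  AddMonoidAlgebra.ofCoeff (Finsupp.sum p.coeff fun α a => Finsupp.single α ((∏ j, c j ^ (α j)) * a))

/-- Substitution `z_j ↦ c_j z_j` in a Laurent polynomial in `(z, λ)` (leaving `λ` alone). -/
def scaleZF {d : ℕ} (c : Fin d → ℂ) (P : LMvF d) : LMvF d :=
  AddMonoidAlgebra.ofCoeff (Finsupp.sum P.coeff fun β a => Finsupp.single β ((∏ j, c j ^ (β.1 j)) * a))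

/-- Total degree `α₁ + ⋯ + α_d` of a monomial exponent. -/
def degS {d : ℕ} (α : Fin d →₀ ℤ) : ℤ := ∑ j, α j

/-- `L₋`, the minimal total degree of a (nonzero) Laurent polynomial. -/
def lowDeg {d : ℕ} (p : LMv d) : ℤ := WithTop.untopD 0 ((Finsupp.support p.coeff).image degS).min

/-- The lowest degree component of a Laurent polynomial. -/
def lowComp {d : ℕ} (p : LMv d) : LMv d :=
  AddMonoidAlgebra.ofCoeff (Finsupp.filter (fun α => degS α = lowDeg p) p.coeff)

/-- The fundamental cell `W = {n ∈ ℤ^d : 0 ≤ n_j ≤ q_j - 1}`. -/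
def Wcell {d : ℕ} (q : Fin d → ℕ) : Finset (Fin d → ℤ) :=
  Fintype.piFinset fun j => (Finset.range (q j)).image (fun k : ℕ => (k : ℤ))

/-- The canonical embedding of Laurent polynomials in `z` into Laurent polynomials in `(z,λ)`. -/
def embedZ {d : ℕ} (p : LMv d) : LMvF d := AddMonoidAlgebra.ofCoeff (Finsupp.mapDomain (fun α => (α, (0:ℤ))) p.coeff)

/-- The variable `λ`. -/
def lamF (d : ℕ) : LMvF d := AddMonoidAlgebra.ofCoeff (Finsupp.single ((0 : Fin d →₀ ℤ), (1:ℤ)) (1:ℂ))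

/-- Exponent stretching `α ↦ (q₁α₁,…,q_dα_d)`. -/
def stretchE {d : ℕ} (q : Fin d → ℕ) (α : Fin d →₀ ℤ) : Fin d →₀ ℤ :=
  Finsupp.sum α fun j a => Finsupp.single j ((q j : ℤ) * a)

/-- The substitution `𝒫(w,λ) ↦ 𝒫(z₁^{q₁},…,z_d^{q_d},λ)`. -/
def stretchF {d : ℕ} (q : Fin d → ℕ) (P : LMvF d) : LMvF d :=
  AddMonoidAlgebra.ofCoeff (Finsupp.mapDomain (fun β => (stretchE q β.1, β.2)) P.coeff)

/-- Assumption (A₂): the Laurent polynomials `h(μ_n ⊙ z)`, `n ∈ W`, are pairwise distinct. -/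
def PairwiseDistinctH {d : ℕ} (q : Fin d → ℕ) (h : LMv d) : Prop :=
  ∀ n ∈ Wcell q, ∀ n' ∈ Wcell q, n ≠ n' → scaleZ (muV q n) h ≠ scaleZ (muV q n') h

/-- The polynomial `𝒫̃(z,λ) = ∏_{n∈W}(p(μ_n⊙z) − λ) + Σ_{X∈𝒮} C_X ∏_{n∈X}(p(μ_n⊙z) − λ)`. -/
def Ptilde {d : ℕ} (q : Fin d → ℕ) (p : LMv d)
    (S : Finset (Finset (Fin d → ℤ))) (C : Finset (Fin d → ℤ) → ℂ) : LMvF d :=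
  (∏ n ∈ Wcell q, (embedZ (scaleZ (muV q n) p) - lamF d))
    + ∑ X ∈ S, C X • ∏ n ∈ X, (embedZ (scaleZ (muV q n) p) - lamF d)
/-- The symbol `p(z) = Σ_n a_n z^{-n}` of a finite-range Toeplitz operator. -/
def symbA {d : ℕ} (a : (Fin d → ℤ) →₀ ℂ) : LMv d :=
  AddMonoidAlgebra.ofCoeff (Finsupp.sum a fun n c => Finsupp.single (-(Finsupp.equivFunOnFinite.symm n)) c)

/-- `V` is `q`-periodic. -/
def IsPeriodic {d : ℕ} (q : Fin d → ℕ) (V : (Fin d → ℤ) → ℂ) : Prop :=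
  ∀ (n : Fin d → ℤ) (j : Fin d), V (n + (q j : ℤ) • Pi.single j 1) = V n

/-- The discrete Fourier transform `V̂_ℓ = Q^{-1/2} Σ_{m∈W} e^{-2πi⟨m,ℓ⟩} V_m`. -/
def Vhat {d : ℕ} (q : Fin d → ℕ) (V : (Fin d → ℤ) → ℂ) (l : Fin d → ℝ) : ℂ :=
  ((1 / Real.sqrt (∏ j, (q j : ℝ)) : ℝ) : ℂ) *
    ∑ m ∈ Wcell q, Complex.exp (-(2 * Real.pi * Complex.I) *
      ((∑ j, (m j : ℝ) * l j : ℝ) : ℂ)) * V m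

/-- The diagonal matrix `D^z` with entries `p(μ_n ⊙ z)`, as Laurent polynomials. -/
def Dmat {d : ℕ} (q : Fin d → ℕ) (p : LMv d) :
    Matrix {n // n ∈ Wcell q} {n // n ∈ Wcell q} (LMvF d) :=
  Matrix.diagonal fun n => embedZ (scaleZ (muV q n.1) p)

/-- The constant matrix `B` with entries `V̂((n-n')/q)`. -/
def Bmat {d : ℕ} (q : Fin d → ℕ) (V : (Fin d → ℤ) → ℂ) :
    Matrix {n // n ∈ Wcell q} {n // n ∈ Wcell q} (LMvF d) :=
  fun n n' => AddMonoidAlgebra.ofCoeff (Finsupp.single ((0 : Fin d →₀ ℤ), (0:ℤ))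
    (Vhat q V fun j => ((n.1 j - n'.1 j : ℤ) : ℝ) / (q j : ℝ)))

/-- `det(D^z + B - λI)`, a Laurent polynomial in `z` and `λ`. -/
def detLaur {d : ℕ} (q : Fin d → ℕ) (p : LMv d) (V : (Fin d → ℤ) → ℂ) : LMvF d :=
  Matrix.det (Dmat q p + Bmat q V - Matrix.diagonal fun _ => lamF d)
/-- Ordinary polynomials in `z₁,…,z_d` and `λ̃` (the extra `Unit` variable is `λ̃`). -/
abbrev MvP (d : ℕ) : Type := MvPolynomial (Fin d ⊕ Unit) ℂ

/-- Conversion of a Laurent polynomial in `(z,λ)` with nonnegative exponents into an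
ordinary polynomial in `ℂ[z₁,…,z_d,λ̃]` (negative exponents are truncated). -/
def toMvP {d : ℕ} (P : LMvF d) : MvP d :=
  Finsupp.sum P.coeff fun β c =>
    MvPolynomial.monomial
      (Finsupp.equivFunOnFinite.symm
        (Sum.elim (fun j => (β.1 j).toNat) (fun _ => β.2.toNat))) c

/-- `γ_j(p)`: minus the lowest exponent of `z_j` in `p` if that exponent is negative,
and `0` otherwise. -/
def gammaV {d : ℕ} (p : LMv d) (j : Fin d) : ℤ :=
  max 0 (-(WithTop.untopD 0 ((Finsupp.support p.coeff).image fun α => α j).min))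

/-- The exponent vector `γ' = (γ₁',…,γ_d')` computed from the lowest degree component of `p`. -/
def gammaE' {d : ℕ} (p : LMv d) : Fin d →₀ ℤ :=
  Finsupp.equivFunOnFinite.symm fun j => gammaV (lowComp p) j

/-- The polynomial `r_n(z,λ̃) = λ̃ z^{γ'} h(μ_n⊙z) − z^{γ'} ∈ ℂ[z,λ̃]`. -/
def rPoly {d : ℕ} (q : Fin d → ℕ) (p : LMv d) (n : Fin d → ℤ) : MvP d :=
  MvPolynomial.X (Sum.inr ()) *
      toMvP ((AddMonoidAlgebra.single (gammaE' p, (0:ℤ)) (1:ℂ) : LMvF d) * embedZ (scaleZ (muV q n) (lowComp p)))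
    - toMvP (AddMonoidAlgebra.ofCoeff (Finsupp.single (gammaE' p, (0:ℤ)) (1:ℂ)))

/-- Substitution `w_j ↦ z_j^{q_j}` (fixing `λ̃`) on ordinary polynomials. -/
def stretchMv {d : ℕ} (q : Fin d → ℕ) : MvP d →ₐ[ℂ] MvP d :=
  MvPolynomial.aeval
    (Sum.elim (fun j => MvPolynomial.X (Sum.inl j) ^ q j)
      (fun _ => MvPolynomial.X (Sum.inr ())))

/-- Substitution `z_j ↦ c_j z_j` (fixing `λ̃`) on ordinary polynomials. -/
def scaleMv {d : ℕ} (c : Fin d → ℂ) : MvP d →ₐ[ℂ] MvP d :=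
  MvPolynomial.aeval
    (Sum.elim (fun j => MvPolynomial.C (c j) * MvPolynomial.X (Sum.inl j))
      (fun _ => MvPolynomial.X (Sum.inr ())))

/-- `ã(z,λ̃) = ∏_{n∈W} r_n(z,λ̃)`. -/
def atilde {d : ℕ} (q : Fin d → ℕ) (p : LMv d) : MvP d := ∏ n ∈ Wcell q, rPoly q p n

/-- Substitution `λ ↦ λ̃⁻¹` on Laurent polynomials in `(z,λ)`. -/
def invLam {d : ℕ} (P : LMvF d) : LMvF d :=
  AddMonoidAlgebra.ofCoeff (Finsupp.mapDomain (fun β : (Fin d →₀ ℤ) × ℤ => (β.1, -β.2)) P.coeff)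

/-- The exponent vector `(γ₁ Q/q₁, …, γ_d Q/q_d)` computed from `p`. -/
def gammaQE {d : ℕ} (q : Fin d → ℕ) (p : LMv d) : Fin d →₀ ℤ :=
  Finsupp.equivFunOnFinite.symm fun j => gammaV p j * (((∏ i, q i) / q j : ℕ) : ℤ)

/-- `ℛ(w,λ̃) = λ̃^Q w₁^{γ₁Q/q₁}⋯w_d^{γ_dQ/q_d} 𝒫(w,λ̃⁻¹)`. -/
def Rcal {d : ℕ} (q : Fin d → ℕ) (p : LMv d) (P : LMvF d) : LMvF d :=
  (AddMonoidAlgebra.single (gammaQE q p, ((∏ j, q j : ℕ) : ℤ)) (1:ℂ) : LMvF d) * invLam P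
/-- Reduction of `v ∈ ℤ^d` modulo the lattice `q₁ℤ ⊕ ⋯ ⊕ q_dℤ` into `W`. -/
def modW {d : ℕ} (q : Fin d → ℕ) (hq : ∀ j, 1 ≤ q j) (v : Fin d → ℤ) :
    {x // x ∈ Wcell q} :=
  ⟨fun j => v j % (q j : ℤ), by
    simp only [Wcell, Fintype.mem_piFinset, Finset.mem_image, Finset.mem_range]
    intro j
    have h1 : (0:ℤ) < (q j : ℤ) := by exact_mod_cast hq j
    have h2 : v j % (q j : ℤ) < (q j : ℤ) := Int.emod_lt_of_pos _ h1
    have h3 : (0:ℤ) ≤ v j % (q j : ℤ) := Int.emod_nonneg _ (by omega)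
    exact ⟨(v j % (q j : ℤ)).toNat, by omega, by omega⟩⟩

/-- The extension `u^x` of `u : ℂ^W` to `ℤ^d` satisfying `u^x_{n+m⊙q} = e^{2πi⟨m⊙q,x⟩}u_n`. -/
def extFn {d : ℕ} (q : Fin d → ℕ) (hq : ∀ j, 1 ≤ q j) (x : Fin d → ℝ)
    (u : {n // n ∈ Wcell q} → ℂ) (v : Fin d → ℤ) : ℂ :=
  Complex.exp (2 * Real.pi * Complex.I *
      ∑ j, ((((v j / (q j : ℤ)) * (q j : ℤ) : ℤ) : ℂ) * ((x j : ℝ) : ℂ))) *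
    u (modW q hq v)

/-- The Floquet restriction `H̃(x)` of `H = A + V` to `ℂ^W`. -/
def HtildeFn {d : ℕ} (q : Fin d → ℕ) (hq : ∀ j, 1 ≤ q j) (x : Fin d → ℝ)
    (a : (Fin d → ℤ) →₀ ℂ) (V : (Fin d → ℤ) → ℂ)
    (u : {n // n ∈ Wcell q} → ℂ) : {n // n ∈ Wcell q} → ℂ :=
  fun m => (Finsupp.sum a fun k c => c * extFn q hq x u (fun j => m.1 j - k j)) + V m.1 * u m

/-- The matrix of `H̃(x)` in the standard basis of `ℂ^W`. -/
def Hmat {d : ℕ} (q : Fin d → ℕ) (hq : ∀ j, 1 ≤ q j) (x : Fin d → ℝ)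
    (a : (Fin d → ℤ) →₀ ℂ) (V : (Fin d → ℤ) → ℂ) :
    Matrix {n // n ∈ Wcell q} {n // n ∈ Wcell q} ℂ :=
  fun m n => HtildeFn q hq x a V (Pi.single n 1) m

/-- The Floquet–Bloch transform matrix `ℱ^x`. -/
def Fmat {d : ℕ} (q : Fin d → ℕ) (x : Fin d → ℝ) :
    Matrix {n // n ∈ Wcell q} {n // n ∈ Wcell q} ℂ :=
  fun l n => ((1 / Real.sqrt (∏ j, (q j : ℝ)) : ℝ) : ℂ) *
    Complex.exp (-(2 * Real.pi * Complex.I) *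
      ∑ j, ((((l.1 j : ℝ) / (q j : ℝ) + x j : ℝ) : ℂ) * ((n.1 j : ℤ) : ℂ)))

/-- Numerical evaluation of the symbol `p(z) = Σ_n a_n z^{-n}`. -/
def pEvalN {d : ℕ} (a : (Fin d → ℤ) →₀ ℂ) (z : Fin d → ℂ) : ℂ :=
  Finsupp.sum a fun n c => c * ∏ j, z j ^ (-(n j))

/-- The numerical diagonal matrix `D^z`, `z = e^{2πix}`, with entries `p(μ_n ⊙ z)`. -/
def DmatN {d : ℕ} (q : Fin d → ℕ) (x : Fin d → ℝ) (a : (Fin d → ℤ) →₀ ℂ) :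
    Matrix {n // n ∈ Wcell q} {n // n ∈ Wcell q} ℂ :=
  Matrix.diagonal fun n => pEvalN a fun j =>
    muC (q j) (n.1 j) * Complex.exp (2 * Real.pi * Complex.I * ((x j : ℝ) : ℂ))

/-- The numerical matrix `B`. -/
def BmatN {d : ℕ} (q : Fin d → ℕ) (V : (Fin d → ℤ) → ℂ) :
    Matrix {n // n ∈ Wcell q} {n // n ∈ Wcell q} ℂ :=
  fun n n' => Vhat q V fun j => ((n.1 j - n'.1 j : ℤ) : ℝ) / (q j : ℝ)

/-- The symbol of the discrete Laplacian: `p(z) = -(Σ_j z_j + z_j⁻¹)`. -/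
def pLap (d : ℕ) : LMv d :=
  - ∑ j : Fin d, ((AddMonoidAlgebra.single (Finsupp.single j (1:ℤ)) (1:ℂ) : LMv d)
      + (AddMonoidAlgebra.single (Finsupp.single j (-1:ℤ)) (1:ℂ) : LMv d))

/-- The exponent vector `(a, b) ∈ ℤ²`. -/
def ee2 (a b : ℤ) : Fin 2 →₀ ℤ := Finsupp.single 0 a + Finsupp.single 1 b

/-- The monomial `z₁^a z₂^b`. -/
def mono2 (a b : ℤ) : LMv 2 := AddMonoidAlgebra.single (ee2 a b) (1:ℂ)

/-- The symbol of the extended Harper lattice Laplacian. -/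
def pEHM : LMv 2 :=
  -(mono2 1 0 + mono2 (-1) 0 + mono2 0 1 + mono2 0 (-1)
    + mono2 1 (-1) + mono2 (-1) 1 + mono2 1 1 + mono2 (-1) (-1))

/-- The symbol of the (sheared) triangular lattice Laplacian. -/
def pTri : LMv 2 :=
  -(mono2 1 0 + mono2 (-1) 0 + mono2 0 1 + mono2 0 (-1) + mono2 1 (-1) + mono2 (-1) 1)


open MvPolynomial

section Aux
variable {σ : Type*} [DecidableEq σ] {K : Type*} [CommRing K] [IsDomain K]

/-- The algebra map killing the variable `X j`. -/
noncomputable def killX (j : σ) : MvPolynomial σ K →ₐ[K] MvPolynomial σ K :=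
  aeval fun i => if i = j then 0 else X i

lemma killX_monomial (j : σ) (m : σ →₀ ℕ) (c : K) :
    killX j (monomial m c) = if m j = 0 then monomial m c else 0 := by
  rw [monomial_eq, map_mul]
  have hC : killX j (C c : MvPolynomial σ K) = C c := by
    simp [killX, algebraMap_eq]
  rw [hC]
  rw [Finsupp.prod, map_prod]
  by_cases hm : m j = 0
  · rw [if_pos hm]
    have : ∀ i ∈ m.support, killX (K := K) j (X i ^ m i) = X i ^ m i := by
      intro i hi
      have : i ≠ j := fun h => by
        subst h; exact (Finsupp.mem_support_iff.mp hi) hm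
      simp [killX, this]
    exact congrArg (fun t => C c * t) (Finset.prod_congr rfl this)
  · rw [if_neg hm]
    have hj : j ∈ m.support := Finsupp.mem_support_iff.mpr hm
    have : killX (K := K) j (X j ^ m j) = 0 := by
      simp [killX, zero_pow hm]
    rw [Finset.prod_eq_zero hj this, mul_zero]

lemma coeff_killX (j : σ) (f : MvPolynomial σ K) (m : σ →₀ ℕ) (hm : m j = 0) :
    coeff m (killX j f) = coeff m f := by
  induction f using MvPolynomial.induction_on' with
  | monomial m' c =>
    rw [killX_monomial]
    by_cases h : m' j = 0
    · rw [if_pos h]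
    · rw [if_neg h, coeff_zero, coeff_monomial,
        if_neg (fun he => h (by rw [he]; exact hm))]
  | add p q hp hq => rw [map_add, coeff_add, coeff_add, hp, hq]

lemma X_dvd_sub_killX (j : σ) (f : MvPolynomial σ K) : X j ∣ f - killX j f := by
  induction f using MvPolynomial.induction_on' with
  | monomial m c =>
    rw [killX_monomial]
    by_cases h : m j = 0
    · rw [if_pos h, sub_self]
      exact dvd_zero _
    · rw [if_neg h, sub_zero]
      refine ⟨monomial (m - Finsupp.single j 1) c, ?_⟩
      have hexp : Finsupp.single j 1 + (m - Finsupp.single j 1) = m := by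
        ext i
        rw [Finsupp.add_apply, Finsupp.tsub_apply]
        rcases eq_or_ne i j with rfl | hij
        · rw [Finsupp.single_eq_same]
          omega
        · rw [Finsupp.single_eq_of_ne hij]
          omega
      rw [X, monomial_mul, one_mul, hexp]

  | add p q hp hq =>
    have : p + q - killX j (p + q) = (p - killX j p) + (q - killX j q) := by
      rw [map_add]; ring
    rw [this]
    exact dvd_add hp hq

lemma X_dvd_iff_killX (j : σ) (f : MvPolynomial σ K) : X j ∣ f ↔ killX j f = 0 := by
  constructor
  · rintro ⟨t, rfl⟩
    have : killX j (X j : MvPolynomial σ K) = 0 := by simp [killX]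
    rw [map_mul, this, zero_mul]
  · intro h
    have := X_dvd_sub_killX j f
    rwa [h, sub_zero] at this

lemma prime_X' (j : σ) : Prime (X j : MvPolynomial σ K) := by
  refine ⟨X_ne_zero j, ?_, ?_⟩
  · intro hu
    have := hu.map (killX (K := K) j)
    rw [show killX j (X j : MvPolynomial σ K) = 0 by simp [killX]] at this
    exact zero_ne_one (isUnit_zero_iff.mp this)
  · intro a b hab
    rw [X_dvd_iff_killX] at hab ⊢
    rw [X_dvd_iff_killX]
    rw [map_mul] at hab
    exact mul_eq_zero.mp hab

lemma lin_irred {R : Type*} [CommRing R] [IsDomain R] {a b : R} (ha : a ≠ 0)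
    (hcop : ∀ c : R, c ∣ a → c ∣ b → IsUnit c) :
    Irreducible (Polynomial.X * Polynomial.C a - Polynomial.C b) := by
  set p : Polynomial R := Polynomial.X * Polynomial.C a - Polynomial.C b with hpdef
  have hp1 : p = Polynomial.C a * Polynomial.X + Polynomial.C (-b) := by
    rw [map_neg]; ring
  have hdeg : p.degree = 1 := by rw [hp1]; exact Polynomial.degree_linear ha
  have hnat : p.natDegree = 1 := Polynomial.natDegree_eq_of_degree_eq_some hdeg
  have hp0 : p ≠ 0 := fun h => by simp [h] at hdeg
  have hc1 : p.coeff 1 = a := by rw [hp1]; simp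
  have hc0 : p.coeff 0 = -b := by rw [hp1]; simp
  constructor
  · intro hu
    have := Polynomial.natDegree_eq_zero_of_isUnit hu
    omega
  · intro f g hfg
    have hf0 : f ≠ 0 := fun h => hp0 (by rw [hfg, h, zero_mul])
    have hg0 : g ≠ 0 := fun h => hp0 (by rw [hfg, h, mul_zero])
    have hsum : f.natDegree + g.natDegree = 1 := by
      rw [← Polynomial.natDegree_mul hf0 hg0, ← hfg, hnat]
    have key : ∀ u v : Polynomial R, p = u * v → u.natDegree = 0 → IsUnit u := by
      intro u v huv hu
      obtain ⟨c, rfl⟩ : ∃ c, u = Polynomial.C c :=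
        ⟨u.coeff 0, Polynomial.eq_C_of_natDegree_eq_zero hu⟩
      have hca : c ∣ a := by
        refine ⟨v.coeff 1, ?_⟩
        rw [← hc1, huv, Polynomial.coeff_C_mul]
      have hcb : c ∣ b := by
        have : c ∣ -b := ⟨v.coeff 0, by rw [← hc0, huv, Polynomial.coeff_C_mul]⟩
        exact (dvd_neg.mp this)
      exact Polynomial.isUnit_C.mpr (hcop c hca hcb)
    rcases Nat.eq_zero_or_pos f.natDegree with hf | hf
    · exact Or.inl (key f g hfg hf)
    · exact Or.inr (key g f (by rw [hfg, mul_comm]) (by omega))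

end Aux

section Aux2
open MvPolynomial

set_option linter.unusedSectionVars false
set_option maxHeartbeats 1000000

lemma scaleZ_apply' {d : ℕ} (c : Fin d → ℂ) (f : LMv d) (α : Fin d →₀ ℤ) :
    (scaleZ c f).coeff α = (∏ j, c j ^ (α j)) * f.coeff α := by
  classical
  rw [scaleZ, AddMonoidAlgebra.coeff_ofCoeff, Finsupp.sum_apply, Finsupp.sum]
  simp only [Finsupp.single_apply]
  rw [Finset.sum_ite_eq' f.coeff.support α (fun β => (∏ j, c j ^ (β j)) * f.coeff β)]
  by_cases hα : α ∈ f.coeff.support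
  · rw [if_pos hα]
  · rw [if_neg hα, Finsupp.notMem_support_iff.mp hα, mul_zero]

lemma single_mul_embedZ {d : ℕ} (γ : Fin d →₀ ℤ) (f : LMv d) :
    (AddMonoidAlgebra.single ((γ, (0:ℤ)) : (Fin d →₀ ℤ) × ℤ) (1:ℂ) : LMvF d) * embedZ f
      = AddMonoidAlgebra.ofCoeff (Finsupp.mapDomain (fun α : Fin d →₀ ℤ => (γ + α, (0:ℤ))) f.coeff) := by
  induction f using AddMonoidAlgebra.induction_linear with
  | zero => simp [embedZ]
  | add f g hf hg =>
      rw [embedZ, AddMonoidAlgebra.coeff_add, Finsupp.mapDomain_add, Finsupp.mapDomain_add,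
        AddMonoidAlgebra.ofCoeff_add, AddMonoidAlgebra.ofCoeff_add, mul_add]
      rw [embedZ] at hf hg
      rw [hf, hg]
  | single a b =>
      rw [embedZ, AddMonoidAlgebra.coeff_single, Finsupp.mapDomain_single, Finsupp.mapDomain_single,
        AddMonoidAlgebra.ofCoeff_single, AddMonoidAlgebra.ofCoeff_single]
      have : (AddMonoidAlgebra.single ((γ, (0:ℤ)) : (Fin d →₀ ℤ) × ℤ) (1:ℂ) : LMvF d)
          * AddMonoidAlgebra.single (a, (0:ℤ)) b
          = AddMonoidAlgebra.single ((γ, (0:ℤ)) + (a, (0:ℤ))) (1 * b) :=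
        AddMonoidAlgebra.single_mul_single _ _ _ _
      rw [this, one_mul]
      rfl

lemma toMvP_single' {d : ℕ} (β : (Fin d →₀ ℤ) × ℤ) (c : ℂ) :
    toMvP (AddMonoidAlgebra.ofCoeff (Finsupp.single β c)) = monomial
      (Finsupp.equivFunOnFinite.symm
        (Sum.elim (fun j => (β.1 j).toNat) (fun _ => β.2.toNat))) c := by
  rw [toMvP, AddMonoidAlgebra.coeff_ofCoeff, Finsupp.sum_single_index]
  simp

lemma mapDomain_inl_eq {d : ℕ} (g : Fin d → ℕ) :
    (Finsupp.equivFunOnFinite.symm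
        (Sum.elim g (fun _ => 0)) : (Fin d ⊕ Unit) →₀ ℕ)
      = Finsupp.mapDomain Sum.inl (Finsupp.equivFunOnFinite.symm g) := by
  classical
  ext x
  cases x with
  | inl j =>
    rw [Finsupp.mapDomain_apply Sum.inl_injective]
    simp
  | inr u =>
    rw [Finsupp.mapDomain_notin_range _ _ (by simp)]
    simp

end Aux2

theorem stmt6 {d : ℕ} (hd : 1 ≤ d) (q : Fin d → ℕ) (hq : ∀ j, 1 ≤ q j)
    (p : LMv d) (hp : p ≠ 0) :
    ∀ n ∈ Wcell q, Irreducible (rPoly q p n) := by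
  classical
  intro n _hn
  open MvPolynomial in
  -- the lowest degree component is nonzero
  have hsuppp : p.coeff.support.Nonempty :=
    Finsupp.support_nonempty_iff.mpr (fun h' => hp (AddMonoidAlgebra.coeff_eq_zero.mp h'))
  have himg : (p.coeff.support.image degS).Nonempty := hsuppp.image _
  obtain ⟨α₁, hα₁, hα₁deg⟩ : ∃ α ∈ p.coeff.support, degS α = lowDeg p := by
    obtain ⟨α, hα, hval⟩ := Finset.mem_image.mp (Finset.min'_mem _ himg)
    refine ⟨α, hα, ?_⟩
    rw [lowDeg, ← Finset.coe_min' himg, WithTop.untopD_coe]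
    exact hval
  have hh0 : lowComp p ≠ 0 := by
    intro h0
    have h1 : (lowComp p).coeff α₁ = p.coeff α₁ := Finsupp.filter_apply_pos _ _ hα₁deg
    rw [h0] at h1
    exact (Finsupp.mem_support_iff.mp hα₁) h1.symm
  set h : LMv d := lowComp p with hhdef
  have hsupph : h.coeff.support.Nonempty :=
    Finsupp.support_nonempty_iff.mpr (fun h' => hh0 (AddMonoidAlgebra.coeff_eq_zero.mp h'))
  -- gamma facts
  have hkey : ∀ j : Fin d, (∀ α ∈ h.coeff.support, 0 ≤ gammaV h j + α j)
      ∧ (0 < gammaV h j → ∃ α ∈ h.coeff.support, gammaV h j + α j = 0) := by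
    intro j
    have himgj : (h.coeff.support.image fun α => α j).Nonempty := hsupph.image _
    set M := (h.coeff.support.image fun α => α j).min' himgj with hM
    have hgam : gammaV h j = max 0 (-M) := by
      rw [gammaV, ← Finset.coe_min' himgj, WithTop.untopD_coe]
    obtain ⟨αm, hαm, hαmj⟩ := Finset.mem_image.mp (Finset.min'_mem _ himgj)
    constructor
    · intro α hα
      have hle : M ≤ α j := Finset.min'_le _ _ (Finset.mem_image_of_mem _ hα)
      rw [hgam]
      rcases max_cases (0:ℤ) (-M) with ⟨he, hc⟩ | ⟨he, hc⟩ <;> omega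
    · intro hpos
      refine ⟨αm, hαm, ?_⟩
      rw [hgam] at hpos ⊢
      rw [hαmj]
      rcases max_cases (0:ℤ) (-M) with ⟨he, hc⟩ | ⟨he, hc⟩ <;> omega
  have hgE : ∀ j, gammaE' p j = gammaV h j := by
    intro j
    rw [gammaE']
    simp [hhdef]
  -- the scaled lowest component
  set s : LMv d := scaleZ (muV q n) h with hsdef
  have hfac : ∀ α : Fin d →₀ ℤ, (∏ j, muV q n j ^ (α j)) ≠ 0 := by
    intro α
    refine Finset.prod_ne_zero_iff.mpr fun j _ => ?_
    refine zpow_ne_zero _ ?_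
    show muC (q j) (n j) ≠ 0
    rw [muC]
    exact Complex.exp_ne_zero _
  have hsapply : ∀ α, s.coeff α = (∏ j, muV q n j ^ (α j)) * h.coeff α := fun α => scaleZ_apply' _ _ _
  have hssupp : s.coeff.support = h.coeff.support := by
    ext α
    simp only [Finsupp.mem_support_iff, hsapply]
    rw [mul_ne_zero_iff]
    exact ⟨fun h' => h'.2, fun h' => ⟨hfac α, h'⟩⟩
  -- the polynomials A' and B'
  set Eγ : (Fin d →₀ ℤ) → (Fin d →₀ ℕ) :=
    fun α => Finsupp.equivFunOnFinite.symm fun j => (gammaV h j + α j).toNat with hEγ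
  set A' : MvPolynomial (Fin d) ℂ := s.coeff.sum fun α c => monomial (Eγ α) c with hA'
  set γn : Fin d →₀ ℕ :=
    Finsupp.equivFunOnFinite.symm fun j => (gammaV h j).toNat with hγn
  set B' : MvPolynomial (Fin d) ℂ := monomial γn 1 with hB'
  -- factorization of rPoly
  have hfact : rPoly q p n
      = X (Sum.inr ()) * rename Sum.inl A' - rename Sum.inl B' := by
    rw [rPoly]
    congr 1
    · congr 1
      show toMvP ((AddMonoidAlgebra.single ((gammaE' p, (0:ℤ))) (1:ℂ) : LMvF d) * embedZ s) = _
      rw [single_mul_embedZ]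
      rw [toMvP, AddMonoidAlgebra.coeff_ofCoeff]
      rw [Finsupp.sum_mapDomain_index (fun β => by simp)
        (fun β m₁ m₂ => by rw [map_add])]
      rw [hA', map_finsuppSum, Finsupp.sum]
      refine Finset.sum_congr rfl fun α hα => ?_
      dsimp only
      rw [rename_monomial]
      congr 1
      have h1 : (Sum.elim (fun j => (((gammaE' p + α, (0:ℤ)).1 : Fin d →₀ ℤ) j).toNat)
            (fun _ : Unit => ((gammaE' p + α, (0:ℤ)).2 : ℤ).toNat))
          = Sum.elim (fun j => (gammaV h j + α j).toNat) (fun _ : Unit => 0) := by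
        funext x
        cases x with
        | inl j => simp [hgE j]
        | inr u => simp
      rw [h1, mapDomain_inl_eq]
    · show toMvP (AddMonoidAlgebra.ofCoeff (Finsupp.single ((gammaE' p, (0:ℤ))) (1:ℂ))) = _
      rw [toMvP_single']
      rw [rename_monomial]
      congr 1
      have h1 : (Sum.elim (fun j => (((gammaE' p, (0:ℤ)).1 : Fin d →₀ ℤ) j).toNat)
            (fun _ : Unit => ((gammaE' p, (0:ℤ)).2 : ℤ).toNat))
          = Sum.elim (fun j => (gammaV h j).toNat) (fun _ : Unit => 0) := by
        funext x
        cases x with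
        | inl j => simp [hgE j]
        | inr u => simp
      rw [h1, mapDomain_inl_eq]
  -- the algebra equivalence to polynomials in λ over MvPolynomial (Fin d) ℂ
  let σe : (Fin d ⊕ Unit) ≃ Option (Fin d) := (Equiv.optionEquivSumPUnit (Fin d)).symm
  let e : MvP d ≃ₐ[ℂ] Polynomial (MvPolynomial (Fin d) ℂ) :=
    (MvPolynomial.renameEquiv ℂ σe).trans (MvPolynomial.optionEquivLeft ℂ (Fin d))
  have he_X : e (X (Sum.inr ())) = Polynomial.X := by
    show (MvPolynomial.optionEquivLeft ℂ (Fin d))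
        ((MvPolynomial.renameEquiv ℂ σe) (X (Sum.inr ()))) = _
    rw [MvPolynomial.renameEquiv_apply, rename_X]
    have h1 : σe (Sum.inr ()) = none := rfl
    rw [h1, MvPolynomial.optionEquivLeft_X_none]
  have he_C : ∀ f : MvPolynomial (Fin d) ℂ, e (rename Sum.inl f) = Polynomial.C f := by
    intro f
    have h1 : (e.toAlgHom.comp (rename (R := ℂ) Sum.inl))
        = (Polynomial.CAlgHom (R := ℂ) (A := MvPolynomial (Fin d) ℂ)) := by
      apply MvPolynomial.algHom_ext
      intro i
      simp only [AlgHom.coe_comp, Function.comp_apply, rename_X, AlgEquiv.toAlgHom_eq_coe,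
        AlgHom.coe_coe]
      show e (X (Sum.inl i)) = _
      show (MvPolynomial.optionEquivLeft ℂ (Fin d))
          ((MvPolynomial.renameEquiv ℂ σe) (X (Sum.inl i))) = _
      rw [MvPolynomial.renameEquiv_apply, rename_X]
      have h2 : σe (Sum.inl i) = some i := rfl
      rw [h2, MvPolynomial.optionEquivLeft_X_some]
      rfl
    exact DFunLike.congr_fun h1 f
  -- key coefficient facts about A'
  have hEγinj : ∀ α ∈ h.coeff.support, ∀ α' ∈ h.coeff.support, Eγ α = Eγ α' → α = α' := by
    intro α hα α' hα' he
    ext j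
    have h1 := (hkey j).1 α hα
    have h2 := (hkey j).1 α' hα'
    have h3 : Eγ α j = Eγ α' j := by rw [he]
    simp only [hEγ, Finsupp.coe_equivFunOnFinite_symm] at h3
    omega
  have hcoeffA : ∀ α ∈ h.coeff.support, coeff (Eγ α) A' = s.coeff α := by
    intro α₀ hα₀
    rw [hA', Finsupp.sum, coeff_sum]
    rw [Finset.sum_eq_single_of_mem α₀ (by rw [hssupp]; exact hα₀)
      (fun α hα hne => ?_)]
    · rw [coeff_monomial, if_pos rfl]
    · rw [coeff_monomial, if_neg]
      intro he
      exact hne (hEγinj α (by rw [← hssupp]; exact hα) α₀ hα₀ he)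
  have hA'ne : A' ≠ 0 := by
    obtain ⟨α₀, hα₀⟩ := hsupph
    intro h0
    have h1 := hcoeffA α₀ hα₀
    rw [h0] at h1
    simp only [coeff_zero] at h1
    exact (Finsupp.mem_support_iff.mp (by rw [hssupp]; exact hα₀ : α₀ ∈ s.coeff.support)) h1.symm
  have hnodvd : ∀ j : Fin d, 0 < gammaV h j → ¬ (X j ∣ A') := by
    intro j hj hdvd
    obtain ⟨αs, hαs, hzero⟩ := (hkey j).2 hj
    rw [X_dvd_iff_killX] at hdvd
    have h1 : coeff (Eγ αs) (killX j A') = coeff (Eγ αs) A' := by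
      apply coeff_killX
      simp only [hEγ, Finsupp.coe_equivFunOnFinite_symm]
      omega
    rw [hdvd] at h1
    simp only [map_zero, coeff_zero] at h1
    rw [hcoeffA αs hαs] at h1
    exact (Finsupp.mem_support_iff.mp (by rw [hssupp]; exact hαs : αs ∈ s.coeff.support)) h1.symm
  -- coprimality of A' and B'
  have hcop : ∀ c : MvPolynomial (Fin d) ℂ, c ∣ A' → c ∣ B' → IsUnit c := by
    intro c hca hcb
    by_contra hcu
    have hc0 : c ≠ 0 := by rintro rfl; exact hA'ne (zero_dvd_iff.mp hca)
    obtain ⟨i, hiirr, hic⟩ := WfDvdMonoid.exists_irreducible_factor hcu hc0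
    have hiprime : Prime i := (UniqueFactorizationMonoid.irreducible_iff_prime).mp hiirr
    have hBprod : B' = ∏ j ∈ γn.support, X j ^ γn j := by
      rw [hB', monomial_eq, map_one, one_mul, Finsupp.prod]
    have hib : i ∣ ∏ j ∈ γn.support, X j ^ γn j := by
      rw [← hBprod]; exact hic.trans hcb
    obtain ⟨j, hjmem, hjdvd⟩ := hiprime.exists_mem_finset_dvd hib
    have hiXj : i ∣ X j := hiprime.dvd_of_dvd_pow hjdvd
    have hXjA : (X j : MvPolynomial (Fin d) ℂ) ∣ A' :=
      (((hiirr.associated_of_dvd (prime_X' j).irreducible hiXj).symm).dvd).trans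
        (hic.trans hca)
    have hjpos : 0 < gammaV h j := by
      have h2 := Finsupp.mem_support_iff.mp hjmem
      simp only [hγn, Finsupp.coe_equivFunOnFinite_symm] at h2
      omega
    exact hnodvd j hjpos hXjA
  -- conclude
  refine (MulEquiv.irreducible_iff e).mp ?_
  have himg2 : e (rPoly q p n) = Polynomial.X * Polynomial.C A' - Polynomial.C B' := by
    rw [hfact, map_sub, map_mul, he_X, he_C, he_C]
  rw [himg2]
  exact lin_irred hA'ne hcop
end
end

section
/- Let p(z₁,z₂) = −(z₁ + 1/z₁ + z₂ + 1/z₂ + z₁/z₂ + z₂/z₁ + z₁z₂ + 1/(z₁z₂)) (the symbol of the extended Harper lattice Laplacian). Then the lowest degree component of p is h(z) = −1/(z₁z₂), which has degree −2 < 0; moreover, if gcd(q₁,q₂) = 1, then the Laurent polynomials h(μ_n⊙z), n ∈ W, are pairwise distinct. Hence, for coprime periods q₁, q₂, p satisfies Assumptions (A₁) and (A₂). -/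
open scoped BigOperators
open Complex

noncomputable section

lemma ee2_apply0 (a b : ℤ) : ee2 a b 0 = a := by
  simp [ee2, Finsupp.single_apply]

lemma ee2_apply1 (a b : ℤ) : ee2 a b 1 = b := by
  simp [ee2, Finsupp.single_apply]

lemma ee2_inj {a b c d : ℤ} : ee2 a b = ee2 c d ↔ a = c ∧ b = d := by
  constructor
  · intro h
    constructor
    · have := DFunLike.congr_fun h 0
      simpa [ee2_apply0] using this
    · have := DFunLike.congr_fun h 1
      simpa [ee2_apply1] using this
  · rintro ⟨rfl, rfl⟩; rfl

lemma degS_ee2 (a b : ℤ) : degS (ee2 a b) = a + b := by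
  simp [degS, Fin.sum_univ_two, ee2_apply0, ee2_apply1]

lemma lmv_add_apply (f g : LMv 2) (α : Fin 2 →₀ ℤ) : (f + g).coeff α = f.coeff α + g.coeff α := rfl
lemma lmv_neg_apply (f : LMv 2) (α : Fin 2 →₀ ℤ) : (-f).coeff α = -(f.coeff α) := rfl

lemma pEHM_apply (α : Fin 2 →₀ ℤ) : pEHM.coeff α =
    -((if ee2 1 0 = α then (1:ℂ) else 0) + (if ee2 (-1) 0 = α then 1 else 0)
      + (if ee2 0 1 = α then 1 else 0) + (if ee2 0 (-1) = α then 1 else 0)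
      + (if ee2 1 (-1) = α then 1 else 0) + (if ee2 (-1) 1 = α then 1 else 0)
      + (if ee2 1 1 = α then 1 else 0) + (if ee2 (-1) (-1) = α then 1 else 0)) := by
  simp only [pEHM, mono2, AddMonoidAlgebra.coeff_single, lmv_add_apply, lmv_neg_apply,
    Finsupp.single_apply]

lemma pEHM_supp (α : Fin 2 →₀ ℤ) (h : pEHM.coeff α ≠ 0) :
    α = ee2 1 0 ∨ α = ee2 (-1) 0 ∨ α = ee2 0 1 ∨ α = ee2 0 (-1)
      ∨ α = ee2 1 (-1) ∨ α = ee2 (-1) 1 ∨ α = ee2 1 1 ∨ α = ee2 (-1) (-1) := by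
  rw [pEHM_apply] at h
  by_contra hc
  push_neg at hc
  obtain ⟨h1, h2, h3, h4, h5, h6, h7, h8⟩ := hc
  rw [if_neg (Ne.symm h1), if_neg (Ne.symm h2), if_neg (Ne.symm h3), if_neg (Ne.symm h4),
    if_neg (Ne.symm h5), if_neg (Ne.symm h6), if_neg (Ne.symm h7), if_neg (Ne.symm h8)] at h
  simp at h

lemma pEHM_low : pEHM.coeff (ee2 (-1) (-1)) = -1 := by
  rw [pEHM_apply]
  rw [if_neg, if_neg, if_neg, if_neg, if_neg, if_neg, if_neg, if_pos rfl] <;>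
    simp [ee2_inj] <;> omega

lemma degS_bound (α : Fin 2 →₀ ℤ) (h : pEHM.coeff α ≠ 0) : -2 ≤ degS α := by
  rcases pEHM_supp α h with rfl|rfl|rfl|rfl|rfl|rfl|rfl|rfl <;> rw [degS_ee2] <;> norm_num

lemma lowDeg_pEHM : lowDeg pEHM = -2 := by
  have hmem : ee2 (-1) (-1) ∈ pEHM.coeff.support := by
    rw [Finsupp.mem_support_iff, pEHM_low]; norm_num
  have hmem2 : (-2:ℤ) ∈ pEHM.coeff.support.image degS := by
    refine Finset.mem_image.2 ⟨_, hmem, ?_⟩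
    rw [degS_ee2]; norm_num
  have hmin : (pEHM.coeff.support.image degS).min = ((-2:ℤ) : WithTop ℤ) := by
    apply le_antisymm
    · exact Finset.min_le hmem2
    · refine Finset.le_min fun b hb => ?_
      obtain ⟨α, hα, rfl⟩ := Finset.mem_image.1 hb
      exact_mod_cast degS_bound α (Finsupp.mem_support_iff.1 hα)
  rw [lowDeg, hmin]
  rfl

lemma lowComp_pEHM : lowComp pEHM = - mono2 (-1) (-1) := by
  ext α
  rw [lowComp, AddMonoidAlgebra.coeff_ofCoeff, lowDeg_pEHM, Finsupp.filter_apply]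
  by_cases hα : α = ee2 (-1) (-1)
  · subst hα
    rw [if_pos (by rw [degS_ee2]; norm_num), pEHM_low]
    simp [mono2, AddMonoidAlgebra.coeff_single, lmv_neg_apply, Finsupp.single_apply]
  · have hr : (-mono2 (-1) (-1)).coeff α = 0 := by
      rw [show ((-mono2 (-1) (-1)).coeff α = -((mono2 (-1) (-1)).coeff α)) from rfl]
      simp [mono2, AddMonoidAlgebra.coeff_single, Finsupp.single_apply, Ne.symm hα]
    rw [hr]
    split_ifs with hd
    · by_contra h
      rcases pEHM_supp α h with rfl|rfl|rfl|rfl|rfl|rfl|rfl|rfl <;>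
        rw [degS_ee2] at hd <;> first | omega | exact hα rfl
    · rfl

lemma scaleZ_single (c : Fin 2 → ℂ) (α : Fin 2 →₀ ℤ) (v : ℂ) :
    scaleZ c (AddMonoidAlgebra.single α v : LMv 2) = AddMonoidAlgebra.single α ((∏ j, c j ^ (α j)) * v) := by
  rw [scaleZ, AddMonoidAlgebra.coeff_single, Finsupp.sum_single_index]
  · rfl
  · simp

lemma lowComp_pEHM' : lowComp pEHM = AddMonoidAlgebra.single (ee2 (-1) (-1)) (-1:ℂ) := by
  rw [lowComp_pEHM, mono2]
  rw [show ((-1:ℂ) = -(1:ℂ)) from rfl, AddMonoidAlgebra.single_neg]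

lemma muC_ne_zero (Q : ℕ) (m : ℤ) : muC Q m ≠ 0 := Complex.exp_ne_zero _

lemma mem_Wcell {q : Fin 2 → ℕ} {n : Fin 2 → ℤ} (h : n ∈ Wcell q) (j : Fin 2) :
    0 ≤ n j ∧ n j < q j := by
  simp only [Wcell, Fintype.mem_piFinset, Finset.mem_image, Finset.mem_range] at h
  obtain ⟨k, hk, hkn⟩ := h j
  omega

lemma muC_mul_inj (q : Fin 2 → ℕ) (hq : ∀ j, 1 ≤ q j) (hco : Nat.Coprime (q 0) (q 1))
    (n n' : Fin 2 → ℤ) (hn : n ∈ Wcell q) (hn' : n' ∈ Wcell q)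
    (he : muC (q 0) (n 0) * muC (q 1) (n 1) = muC (q 0) (n' 0) * muC (q 1) (n' 1)) :
    n = n' := by
  obtain ⟨hb00, hb01⟩ := mem_Wcell hn 0
  obtain ⟨hb10, hb11⟩ := mem_Wcell hn 1
  obtain ⟨hb00', hb01'⟩ := mem_Wcell hn' 0
  obtain ⟨hb10', hb11'⟩ := mem_Wcell hn' 1
  rw [muC, muC, muC, muC, ← Complex.exp_add, ← Complex.exp_add,
    Complex.exp_eq_exp_iff_exists_int] at he
  obtain ⟨k, hk⟩ := he
  have hq0 : ((q 0 : ℂ)) ≠ 0 := by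
    exact_mod_cast Nat.cast_ne_zero.2 (by omega : q 0 ≠ 0)
  have hq1 : ((q 1 : ℂ)) ≠ 0 := by
    exact_mod_cast Nat.cast_ne_zero.2 (by omega : q 1 ≠ 0)
  have hpi : (2 * (Real.pi : ℂ) * Complex.I) ≠ 0 := by
    simp [Real.pi_ne_zero, Complex.I_ne_zero]
  have hC : (n 0 : ℂ) * q 1 + (n 1 : ℂ) * q 0
      = (n' 0 : ℂ) * q 1 + (n' 1 : ℂ) * q 0 + k * (q 0 * q 1) := by
    field_simp at hk
    have h2 : (2 * (Real.pi : ℂ) * Complex.I) * ((n 0 : ℂ) * q 1 + (n 1 : ℂ) * q 0)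
        = (2 * (Real.pi : ℂ) * Complex.I) *
          ((n' 0 : ℂ) * q 1 + (n' 1 : ℂ) * q 0 + k * (q 0 * q 1)) := by
      linear_combination (2 * (Real.pi : ℂ) * Complex.I) * hk
    exact mul_left_cancel₀ hpi h2
  have hZ : n 0 * (q 1 : ℤ) + n 1 * q 0 = n' 0 * q 1 + n' 1 * q 0 + k * (q 0 * q 1) := by
    exact_mod_cast hC
  have hgcd : Int.gcd (q 0 : ℤ) (q 1 : ℤ) = 1 := by
    rw [Int.gcd_natCast_natCast]; exact hco
  have hd0 : (q 0 : ℤ) ∣ (n 0 - n' 0) * q 1 := ⟨n' 1 - n 1 + k * q 1, by linear_combination hZ⟩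
  have hd1 : (q 1 : ℤ) ∣ (n 1 - n' 1) * q 0 := ⟨n' 0 - n 0 + k * q 0, by linear_combination hZ⟩
  have hcop : IsCoprime (q 0 : ℤ) (q 1 : ℤ) := Int.isCoprime_iff_gcd_eq_one.2 hgcd
  have hdd0 : (q 0 : ℤ) ∣ (n 0 - n' 0) := hcop.dvd_of_dvd_mul_right hd0
  have hdd1 : (q 1 : ℤ) ∣ (n 1 - n' 1) := hcop.symm.dvd_of_dvd_mul_right hd1
  have e0 : n 0 = n' 0 := by
    have := Int.eq_zero_of_dvd_of_natAbs_lt_natAbs hdd0 (by omega)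
    omega
  have e1 : n 1 = n' 1 := by
    have := Int.eq_zero_of_dvd_of_natAbs_lt_natAbs hdd1 (by omega)
    omega
  funext j
  fin_cases j
  · exact e0
  · exact e1

theorem stmt16 (q : Fin 2 → ℕ) (hq : ∀ j, 1 ≤ q j) :
    lowComp pEHM = - mono2 (-1) (-1) ∧
    lowDeg pEHM = -2 ∧
    (Nat.Coprime (q 0) (q 1) → PairwiseDistinctH q (lowComp pEHM)) := by
  refine ⟨lowComp_pEHM, lowDeg_pEHM, fun hco => ?_⟩
  intro n hn n' hn' hne heq
  apply hne
  rw [lowComp_pEHM', scaleZ_single, scaleZ_single] at heq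
  have hval := AddMonoidAlgebra.single_right_injective (m := ee2 (-1) (-1)) heq
  have hprod : (∏ j, muV q n j ^ (ee2 (-1) (-1)) j) = ∏ j, muV q n' j ^ (ee2 (-1) (-1)) j :=
    mul_right_cancel₀ (by norm_num) hval
  rw [Fin.prod_univ_two, Fin.prod_univ_two, ee2_apply0, ee2_apply1] at hprod
  simp only [muV, zpow_neg_one, ← mul_inv] at hprod
  exact muC_mul_inj q hq hco n n' hn hn' (inv_injective hprod)
end
end
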